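/- Let p be a prime, n ≥ 1, 0 ≤ i ≤ j ≤ n, and λ ∈ ℤ^n. Write N(λ) for the number of left cosets H_{i,j}A in H_{i,j}\GL_n(ℤ) such that λ ∈ ᵗA L_0 (this condition depends only on the coset of A). Let g denote the greatest common divisor of the entries of λ (with g = 0 when λ = 0). Then N(λ) = |H_{i,j}\S_{i,j}| if p does not divide g; N(λ) = |H_{i,j}\S_i| if p divides g but p² does not divide g; and N(λ) = |H_{i,j}\GL_n(ℤ)| if p² divides g. -/

import Mathlib

open Matrix

noncomputable section

/-- The diagonal entries (as rationals) of the matrix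
`δ_{i,j} = diag(1_i, p·1_{j−i}, p²·1_{n−j})`. -/
def deltaEntry (p i j : ℕ) (a : ℕ) : ℚ :=
  if a < i then 1 else if a < j then (p : ℚ) else (p : ℚ) ^ 2

lemma deltaEntry_ne_zero {p : ℕ} (hp : p.Prime) (i j a : ℕ) :
    deltaEntry p i j a ≠ 0 := by
  have : (p : ℚ) ≠ 0 := Nat.cast_ne_zero.mpr hp.ne_zero
  unfold deltaEntry
  split_ifs <;> simp [this]

/-- `δ_{i,j}` as a unit (invertible element) of the ring of rational `n × n` matrices. -/
def deltaU (p : ℕ) (hp : p.Prime) (n i j : ℕ) : (Matrix (Fin n) (Fin n) ℚ)ˣ where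
  val := Matrix.diagonal fun a : Fin n => deltaEntry p i j (a : ℕ)
  inv := Matrix.diagonal fun a : Fin n => (deltaEntry p i j (a : ℕ))⁻¹
  val_inv := by
    rw [Matrix.diagonal_mul_diagonal]
    have h : (fun a : Fin n => deltaEntry p i j (a : ℕ) * (deltaEntry p i j (a : ℕ))⁻¹)
        = fun _ => 1 := funext fun a => mul_inv_cancel₀ (deltaEntry_ne_zero hp i j a)
    rw [h, Matrix.diagonal_one]
  inv_val := by
    rw [Matrix.diagonal_mul_diagonal]
    have h : (fun a : Fin n => (deltaEntry p i j (a : ℕ))⁻¹ * deltaEntry p i j (a : ℕ))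
        = fun _ => 1 := funext fun a => inv_mul_cancel₀ (deltaEntry_ne_zero hp i j a)
    rw [h, Matrix.diagonal_one]

/-- The canonical embedding `GL_n(ℤ) → GL_n(ℚ)`. -/
def glMap (n : ℕ) : (Matrix (Fin n) (Fin n) ℤ)ˣ →* (Matrix (Fin n) (Fin n) ℚ)ˣ :=
  Units.map ((Int.castRingHom ℚ).mapMatrix).toMonoidHom

/-- The subgroup `H_{i,j} = δ_{i,j} GL_n(ℤ) δ_{i,j}⁻¹ ∩ GL_n(ℤ)` of `GL_n(ℤ)`
(identifying `GL_n(ℤ)` with its image in `GL_n(ℚ)`). -/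
def Hij (p : ℕ) (hp : p.Prime) (n i j : ℕ) : Subgroup (Matrix (Fin n) (Fin n) ℤ)ˣ :=
  Subgroup.comap (glMap n)
    (Subgroup.map (MulAut.conj (deltaU p hp n i j)).toMonoidHom (glMap n).range)

/-- The left coset space `H\G`, i.e. the set of right cosets `H·A`. -/
def cosetSpace {G : Type*} [Group G] (H : Subgroup G) : Type _ :=
  Quotient (QuotientGroup.rightRel H)

/-- `g_p(n,i) = ∏_{a=1}^{i} (p^{n−a+1}−1)/(p^a−1)` for `1 ≤ i ≤ n`, `1` for `i = 0`,
and `0` otherwise. -/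
def gaussCoeff (p n i : ℕ) : ℚ :=
  if i = 0 then 1
  else if 1 ≤ i ∧ i ≤ n then
    ∏ a ∈ Finset.Icc 1 i, ((p : ℚ) ^ (n - a + 1) - 1) / ((p : ℚ) ^ a - 1)
  else 0

/-- The set `S_i ⊆ GL_n(ℤ)` of matrices `A` such that the first `i` entries of the last
row of `A⁻¹` are divisible by `p`. -/
def Sseti (p n i : ℕ) : Set (Matrix (Fin n) (Fin n) ℤ)ˣ :=
  {A | ∀ h : 0 < n, ∀ b : Fin n, (b : ℕ) < i →
    (p : ℤ) ∣ (A⁻¹).val ⟨n - 1, Nat.sub_lt h Nat.one_pos⟩ b}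

/-- The set of left cosets `H·A` (elements of `H\G`) entirely contained in a set `S`. -/
def cosetsIn {G : Type*} [Group G] (H : Subgroup G) (S : Set G) : Set (cosetSpace H) :=
  {c | ∀ A : G, Quotient.mk (QuotientGroup.rightRel H) A = c → A ∈ S}

/-- The set `S_{i,j} ⊆ GL_n(ℤ)` of matrices `A` such that, in the last row of `A⁻¹`, the
first `i` entries are divisible by `p²` and the following `j−i` entries are divisible
by `p`. -/
def Ssetij (p n i j : ℕ) : Set (Matrix (Fin n) (Fin n) ℤ)ˣ :=
  {A | ∀ h : 0 < n, ∀ b : Fin n,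
    ((b : ℕ) < i → (p : ℤ) ^ 2 ∣ (A⁻¹).val ⟨n - 1, Nat.sub_lt h Nat.one_pos⟩ b) ∧
    (i ≤ (b : ℕ) → (b : ℕ) < j → (p : ℤ) ∣ (A⁻¹).val ⟨n - 1, Nat.sub_lt h Nat.one_pos⟩ b)}

/-- The lattice `L_0 = (p²ℤ)^i × (pℤ)^{j−i} × ℤ^{n−j} ⊆ ℤ^n`. -/
def L0set (p n i j : ℕ) : Set (Fin n → ℤ) :=
  {v | ∀ b : Fin n, ((b : ℕ) < i → (p : ℤ) ^ 2 ∣ v b) ∧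
    (i ≤ (b : ℕ) → (b : ℕ) < j → (p : ℤ) ∣ v b)}

/-- `N(λ)`: the number of left cosets `H_{i,j}·A` in `H_{i,j}\GL_n(ℤ)` such that
`λ ∈ ᵗA L_0`. -/
def Ncount (p : ℕ) (hp : p.Prime) (n i j : ℕ) (lam : Fin n → ℤ) : ℕ :=
  Nat.card ↥{c : cosetSpace (Hij p hp n i j) |
    ∃ A : (Matrix (Fin n) (Fin n) ℤ)ˣ,
      Quotient.mk (QuotientGroup.rightRel (Hij p hp n i j)) A = c ∧
      ∃ μ ∈ L0set p n i j, (A.val)ᵀ *ᵥ μ = lam}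

namespace Stmt5Aux

variable {p n i j : ℕ} {hp : p.Prime}


variable {p n i j : ℕ} {hp : p.Prime}

lemma mem_Hij_spec {A : (Matrix (Fin n) (Fin n) ℤ)ˣ} (hA : A ∈ Hij p hp n i j) :
    ∃ B : Matrix (Fin n) (Fin n) ℤ, ∀ a b : Fin n,
      deltaEntry p i j (b : ℕ) * (A.val a b : ℚ)
        = deltaEntry p i j (a : ℕ) * (B a b : ℚ) := by
  obtain ⟨x, ⟨B, hB⟩, hx⟩ := hA
  refine ⟨B.val, fun a b => ?_⟩
  have hval : (deltaU p hp n i j).val * ((glMap n) B).val * ((deltaU p hp n i j)⁻¹).val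
      = ((glMap n) A).val := by
    have := congrArg Units.val hx
    subst hB
    simpa [MulAut.conj_apply, Units.val_mul] using this
  have hentry := congrFun (congrFun hval a) b
  have hBv : ((glMap n) B).val = B.val.map (Int.cast : ℤ → ℚ) := rfl
  have hAv : ((glMap n) A).val = A.val.map (Int.cast : ℤ → ℚ) := rfl
  rw [hBv, hAv] at hentry
  have hd : (deltaU p hp n i j).val = Matrix.diagonal fun a : Fin n => deltaEntry p i j (a : ℕ) := rfl
  have hdi : ((deltaU p hp n i j)⁻¹).val
      = Matrix.diagonal fun a : Fin n => (deltaEntry p i j (a : ℕ))⁻¹ := rfl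
  rw [hd, hdi, Matrix.mul_diagonal, Matrix.diagonal_mul] at hentry
  -- hentry : δ_a * B a b * (δ_b)⁻¹ = A a b
  have hne : deltaEntry p i j (b : ℕ) ≠ 0 := deltaEntry_ne_zero hp i j _
  field_simp at hentry
  simp only [Matrix.map_apply] at hentry
  linear_combination -hentry





lemma deltaEntry_of_lt {a : ℕ} (h : a < i) : deltaEntry p i j a = 1 := if_pos h

lemma deltaEntry_of_mid {a : ℕ} (h1 : i ≤ a) (h2 : a < j) : deltaEntry p i j a = (p : ℚ) := by
  unfold deltaEntry; rw [if_neg (by omega), if_pos h2]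

lemma deltaEntry_of_ge {a : ℕ} (hij : i ≤ j) (h : j ≤ a) : deltaEntry p i j a = (p : ℚ) ^ 2 := by
  unfold deltaEntry; rw [if_neg (by omega), if_neg (by omega)]

variable {A : (Matrix (Fin n) (Fin n) ℤ)ˣ}

lemma hij_dvd (hij : i ≤ j) (hA : A ∈ Hij p hp n i j) (a b : Fin n) :
    ((b : ℕ) < i → j ≤ (a : ℕ) → (p : ℤ) ^ 2 ∣ A.val a b) ∧
    ((b : ℕ) < i → i ≤ (a : ℕ) → (a : ℕ) < j → (p : ℤ) ∣ A.val a b) ∧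
    (i ≤ (b : ℕ) → (b : ℕ) < j → j ≤ (a : ℕ) → (p : ℤ) ∣ A.val a b) := by
  obtain ⟨B, hB⟩ := mem_Hij_spec hA
  have hpQ : (p : ℚ) ≠ 0 := Nat.cast_ne_zero.mpr hp.ne_zero
  refine ⟨fun hb ha => ?_, fun hb ha1 ha2 => ?_, fun hb1 hb2 ha => ?_⟩
  · have h := hB a b
    rw [deltaEntry_of_lt hb, deltaEntry_of_ge hij ha, one_mul] at h
    refine ⟨B a b, ?_⟩
    have : (A.val a b : ℚ) = (((p : ℤ) ^ 2 * B a b : ℤ) : ℚ) := by push_cast; linarith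
    exact Int.cast_injective this
  · have h := hB a b
    rw [deltaEntry_of_lt hb, deltaEntry_of_mid ha1 ha2, one_mul] at h
    refine ⟨B a b, ?_⟩
    have : (A.val a b : ℚ) = (((p : ℤ) * B a b : ℤ) : ℚ) := by push_cast; linarith
    exact Int.cast_injective this
  · have h := hB a b
    rw [deltaEntry_of_mid hb1 hb2, deltaEntry_of_ge hij ha] at h
    refine ⟨B a b, ?_⟩
    have h2 : (p : ℚ) * (A.val a b : ℚ) = (p : ℚ) * ((p : ℚ) * B a b) := by
      rw [h]; ring
    have h3 := mul_left_cancel₀ hpQ h2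
    have : (A.val a b : ℚ) = (((p : ℤ) * B a b : ℤ) : ℚ) := by push_cast; linarith
    exact Int.cast_injective this

/-- stability of the `L0`-type row condition under right mult by an inverse of `Hij` elt -/
lemma stab_L0 (hij : i ≤ j) {k : (Matrix (Fin n) (Fin n) ℤ)ˣ} (hk : k ∈ Hij p hp n i j)
    {v : Fin n → ℤ} (hv : v ∈ L0set p n i j) :
    (fun b => ∑ a, k.val a b * v a) ∈ L0set p n i j := by
  intro b
  constructor
  · intro hb
    apply Finset.dvd_sum
    intro a _
    rcases lt_or_ge (a : ℕ) i with ha | ha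
    · exact Dvd.dvd.mul_left ((hv a).1 ha) _
    · rcases lt_or_ge (a : ℕ) j with ha2 | ha2
      · have h1 := ((hij_dvd hij hk a b).2.1) hb ha ha2
        have h2 := (hv a).2 ha ha2
        have : (p : ℤ) ^ 2 = p * p := sq (p : ℤ)
        rw [this]
        exact mul_dvd_mul h1 h2
      · exact Dvd.dvd.mul_right ((hij_dvd hij hk a b).1 hb ha2) _
  · intro hb1 hb2
    apply Finset.dvd_sum
    intro a _
    rcases lt_or_ge (a : ℕ) i with ha | ha
    · exact Dvd.dvd.mul_left (dvd_trans (dvd_pow_self _ two_ne_zero) ((hv a).1 ha)) _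
    · rcases lt_or_ge (a : ℕ) j with ha2 | ha2
      · exact Dvd.dvd.mul_left ((hv a).2 ha ha2) _
      · exact Dvd.dvd.mul_right ((hij_dvd hij hk a b).2.2 hb1 hb2 ha2) _

/-- stability of the `S_i`-type row condition -/
lemma stab_Si (hij : i ≤ j) {k : (Matrix (Fin n) (Fin n) ℤ)ˣ} (hk : k ∈ Hij p hp n i j)
    {v : Fin n → ℤ} (hv : ∀ b : Fin n, (b : ℕ) < i → (p : ℤ) ∣ v b)
    (b : Fin n) (hb : (b : ℕ) < i) : (p : ℤ) ∣ ∑ a, k.val a b * v a := by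
  apply Finset.dvd_sum
  intro a _
  rcases lt_or_ge (a : ℕ) i with ha | ha
  · exact Dvd.dvd.mul_left (hv a ha) _
  · rcases lt_or_ge (a : ℕ) j with ha2 | ha2
    · exact Dvd.dvd.mul_right ((hij_dvd hij hk a b).2.1 hb ha ha2) _
    · exact Dvd.dvd.mul_right
        (dvd_trans (dvd_pow_self _ two_ne_zero) ((hij_dvd hij hk a b).1 hb ha2)) _




lemma exists_bezout {n : ℕ} (ν : Fin n → ℤ) (hν : Finset.univ.gcd ν = 1) :
    ∃ c : Fin n → ℤ, ∑ a, c a * ν a = 1 := by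
  set I : Ideal ℤ := Ideal.span (Set.range ν) with hI
  have hmem : ∀ a, ν a ∈ I := fun a => Ideal.subset_span (Set.mem_range_self a)
  have hgen : ∀ a, Submodule.IsPrincipal.generator I ∣ ν a := by
    intro a
    rw [← Ideal.mem_span_singleton, Ideal.span_singleton_generator]
    exact hmem a
  have hd1 : Submodule.IsPrincipal.generator I ∣ 1 := by
    rw [← hν]
    exact Finset.dvd_gcd fun b _ => hgen b
  have htop : I = ⊤ :=
    Ideal.eq_top_of_isUnit_mem _ (Submodule.IsPrincipal.generator_mem I)
      (isUnit_of_dvd_one hd1)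
  have h1 : (1 : ℤ) ∈ Ideal.span (Set.range ν) := by rw [← hI, htop]; trivial
  obtain ⟨c, hc⟩ := (Finsupp.mem_span_range_iff_exists_finsupp).mp h1
  exact ⟨c, by simpa [Finsupp.sum_fintype, mul_comm] using hc⟩

lemma exists_unit_row {n : ℕ} (hn : 0 < n) (ν : Fin n → ℤ) (hν : Finset.univ.gcd ν = 1) :
    ∃ U : (Matrix (Fin n) (Fin n) ℤ)ˣ,
      ∀ b, U.val ⟨n - 1, Nat.sub_lt hn Nat.one_pos⟩ b = ν b := by
  obtain ⟨c, hc⟩ := exists_bezout ν hν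
  let f : (Fin n → ℤ) →ₗ[ℤ] ℤ :=
    { toFun := fun x => ∑ a, c a * x a
      map_add' := by intro x y; simp [mul_add, Finset.sum_add_distrib]
      map_smul' := by
        intro m x
        simp only [Pi.smul_apply, smul_eq_mul, RingHom.id_apply]
        rw [Finset.mul_sum]
        exact Finset.sum_congr rfl fun a _ => by ring }
  have hfν : f ν = 1 := hc
  obtain ⟨m, bN⟩ := Submodule.basisOfPid (Pi.basisFun ℤ (Fin n)) (LinearMap.ker f)
  have hli : ∀ (t : ℤ), ∀ x ∈ LinearMap.ker f, t • ν + x = 0 → t = 0 := by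
    intro t x hx hze
    have h : f (t • ν + x) = 0 := by rw [hze]; simp
    rwa [map_add, LinearMap.map_smul, hfν, LinearMap.mem_ker.mp hx, smul_eq_mul, mul_one,
      add_zero] at h
  have hsp : ∀ z : Fin n → ℤ, ∃ t : ℤ, z + t • ν ∈ LinearMap.ker f := by
    intro z
    refine ⟨-(f z), ?_⟩
    rw [LinearMap.mem_ker, map_add, LinearMap.map_smul, hfν, smul_eq_mul, mul_one]
    ring
  let b' : Module.Basis (Fin (m + 1)) ℤ (Fin n → ℤ) := Module.Basis.mkFinCons ν bN hli hsp
  have hb'0 : b' 0 = ν := by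
    have := Module.Basis.coe_mkFinCons ν bN hli hsp
    calc b' 0 = (Fin.cons ν ((↑) ∘ bN) : Fin (m+1) → (Fin n → ℤ)) 0 := by
          rw [show (b' : Fin (m+1) → (Fin n → ℤ)) = Fin.cons ν ((↑) ∘ bN) from this]
      _ = ν := rfl
  have heq : m + 1 = n := by
    have h1 := Module.finrank_eq_card_basis b'
    have h2 := Module.finrank_eq_card_basis (Pi.basisFun ℤ (Fin n))
    simp at h1 h2
    omega
  let last : Fin n := ⟨n - 1, Nat.sub_lt hn Nat.one_pos⟩
  let σ : Fin n ≃ Fin n := Equiv.swap ⟨0, hn⟩ last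
  let bF : Module.Basis (Fin n) ℤ (Fin n → ℤ) := b'.reindex ((finCongr heq).trans σ)
  have hbF : bF last = ν := by
    have : ((finCongr heq).trans σ).symm last = 0 := by
      simp only [Equiv.symm_trans_apply]
      rw [show σ.symm last = ⟨0, hn⟩ from Equiv.swap_apply_right _ _]
      ext
      simp
    rw [show bF last = b' (((finCongr heq).trans σ).symm last) from Module.Basis.reindex_apply b' _ last,
      this, hb'0]
  let X : Matrix (Fin n) (Fin n) ℤ := (Pi.basisFun ℤ (Fin n)).toMatrix bF
  letI : Invertible X := (Pi.basisFun ℤ (Fin n)).invertibleToMatrix bF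
  letI : Invertible Xᵀ := Matrix.invertibleTranspose X
  refine ⟨unitOfInvertible Xᵀ, fun b => ?_⟩
  show Xᵀ last b = ν b
  rw [Matrix.transpose_apply]
  show (Pi.basisFun ℤ (Fin n)).repr (bF last) b = ν b
  rw [hbF]
  simp



/-- The set of matrices A such that lam is in tA L0, reformulated via the inverse. -/
def condSet (p n i j : ℕ) (lam : Fin n → ℤ) : Set (Matrix (Fin n) (Fin n) ℤ)ˣ :=
  {A | (fun b => ∑ a, (A⁻¹).val a b * lam a) ∈ L0set p n i j}

lemma transpose_mulVec_eq (A : (Matrix (Fin n) (Fin n) ℤ)ˣ) (v : Fin n → ℤ) :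
    (A.val)ᵀ *ᵥ ((A⁻¹).val)ᵀ *ᵥ v = v := by
  rw [Matrix.mulVec_mulVec, ← Matrix.transpose_mul, ← Units.val_mul, inv_mul_cancel,
    Units.val_one, Matrix.transpose_one, Matrix.one_mulVec]

lemma transpose_mulVec_eq' (A : (Matrix (Fin n) (Fin n) ℤ)ˣ) (v : Fin n → ℤ) :
    ((A⁻¹).val)ᵀ *ᵥ (A.val)ᵀ *ᵥ v = v := by
  rw [Matrix.mulVec_mulVec, ← Matrix.transpose_mul, ← Units.val_mul, mul_inv_cancel,
    Units.val_one, Matrix.transpose_one, Matrix.one_mulVec]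

lemma inv_transpose_mulVec (A : (Matrix (Fin n) (Fin n) ℤ)ˣ) (lam : Fin n → ℤ) :
    ((A⁻¹).val)ᵀ *ᵥ lam = fun b => ∑ a, (A⁻¹).val a b * lam a := by
  funext b
  simp [Matrix.mulVec, dotProduct]

lemma cond_iff (A : (Matrix (Fin n) (Fin n) ℤ)ˣ) (lam : Fin n → ℤ) :
    (∃ μ ∈ L0set p n i j, (A.val)ᵀ *ᵥ μ = lam) ↔ A ∈ condSet p n i j lam := by
  constructor
  · rintro ⟨μ, hμ, rfl⟩
    have h2 : ((A⁻¹).val)ᵀ *ᵥ ((A.val)ᵀ *ᵥ μ) = μ := transpose_mulVec_eq' A μ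
    rw [inv_transpose_mulVec] at h2
    show (fun b => ∑ a, (A⁻¹).val a b * ((A.val)ᵀ *ᵥ μ) a) ∈ L0set p n i j
    rw [h2]
    exact hμ
  · intro hA
    refine ⟨((A⁻¹).val)ᵀ *ᵥ lam, ?_, transpose_mulVec_eq A lam⟩
    rw [inv_transpose_mulVec]
    exact hA

lemma row_shift (A k : (Matrix (Fin n) (Fin n) ℤ)ˣ) (lam : Fin n → ℤ) (b : Fin n) :
    (∑ a, ((A⁻¹).val * k.val) a b * lam a)
      = ∑ t, k.val t b * (∑ a, (A⁻¹).val a t * lam a) := by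
  simp only [Matrix.mul_apply, Finset.sum_mul]
  rw [Finset.sum_comm]
  refine Finset.sum_congr rfl fun t _ => ?_
  rw [Finset.mul_sum]
  exact Finset.sum_congr rfl fun a _ => by ring

lemma condSet_stable (hij : i ≤ j) (lam : Fin n → ℤ) :
    ∀ h ∈ Hij p hp n i j, ∀ A ∈ condSet p n i j lam, h * A ∈ condSet p n i j lam := by
  intro h hh A hA
  have hinv : ((h * A)⁻¹).val = (A⁻¹).val * (h⁻¹).val := by
    rw [_root_.mul_inv_rev, Units.val_mul]
  show (fun b => ∑ a, ((h * A)⁻¹).val a b * lam a) ∈ L0set p n i j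
  have : (fun b => ∑ a, ((h * A)⁻¹).val a b * lam a)
      = fun b => ∑ t, (h⁻¹).val t b * (∑ a, (A⁻¹).val a t * lam a) := by
    funext b
    rw [hinv, row_shift]
  rw [this]
  exact stab_L0 hij (inv_mem hh) hA

lemma mul_last_row (hn : 0 < n) (A U : (Matrix (Fin n) (Fin n) ℤ)ˣ) (b : Fin n) :
    ((A * U⁻¹)⁻¹).val ⟨n - 1, Nat.sub_lt hn Nat.one_pos⟩ b
      = ∑ a, (A⁻¹).val a b * U.val ⟨n - 1, Nat.sub_lt hn Nat.one_pos⟩ a := by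
  rw [_root_.mul_inv_rev, inv_inv, Units.val_mul, Matrix.mul_apply]
  exact Finset.sum_congr rfl fun a _ => by ring

lemma Ssetij_stable (hn : 0 < n) (hij : i ≤ j) :
    ∀ h ∈ Hij p hp n i j, ∀ A ∈ Ssetij p n i j, h * A ∈ Ssetij p n i j := by
  intro h hh A hA
  intro hn' b
  have hAr := hA hn'
  have hinv : ((h * A)⁻¹).val = (A⁻¹).val * (h⁻¹).val := by
    rw [_root_.mul_inv_rev, Units.val_mul]
  have hrow : ∀ b' : Fin n, ((h * A)⁻¹).val ⟨n - 1, Nat.sub_lt hn' Nat.one_pos⟩ b'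
      = ∑ t, (h⁻¹).val t b' * (A⁻¹).val ⟨n - 1, Nat.sub_lt hn' Nat.one_pos⟩ t := by
    intro b'
    rw [hinv, Matrix.mul_apply]
    exact Finset.sum_congr rfl fun t _ => by ring
  have hv : (fun t => (A⁻¹).val ⟨n - 1, Nat.sub_lt hn' Nat.one_pos⟩ t) ∈ L0set p n i j :=
    fun t => hAr t
  have := stab_L0 (p := p) (hp := hp) hij (inv_mem hh) hv
  rw [hrow b]
  exact this b

lemma Sseti_stable (hn : 0 < n) (hij : i ≤ j) :
    ∀ h ∈ Hij p hp n i j, ∀ A ∈ Sseti p n i, h * A ∈ Sseti p n i := by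
  intro h hh A hA
  intro hn' b hb
  have hinv : ((h * A)⁻¹).val = (A⁻¹).val * (h⁻¹).val := by
    rw [_root_.mul_inv_rev, Units.val_mul]
  have hrow : ((h * A)⁻¹).val ⟨n - 1, Nat.sub_lt hn' Nat.one_pos⟩ b
      = ∑ t, (h⁻¹).val t b * (A⁻¹).val ⟨n - 1, Nat.sub_lt hn' Nat.one_pos⟩ t := by
    rw [hinv, Matrix.mul_apply]
    exact Finset.sum_congr rfl fun t _ => by ring
  rw [hrow]
  exact stab_Si hij (inv_mem hh) (fun t ht => hA hn' t ht) b hb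



variable {G : Type*} [Group G] (H : Subgroup G)

abbrev mkq (A : G) : Quotient (QuotientGroup.rightRel H) :=
  Quotient.mk (QuotientGroup.rightRel H) A

lemma mkq_eq_mkq {A B : G} : mkq H A = mkq H B ↔ B * A⁻¹ ∈ H := by
  rw [Quotient.eq]
  exact QuotientGroup.rightRel_apply

/-- right multiplication equivalence on the coset space -/
def rmul (U : G) : Quotient (QuotientGroup.rightRel H) ≃ Quotient (QuotientGroup.rightRel H) :=
  Quotient.congr (Equiv.mulRight U) (by
    intro a b
    rw [QuotientGroup.rightRel_apply, QuotientGroup.rightRel_apply]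
    simp [mul_assoc])

lemma rmul_mkq (U A : G) : rmul H U (mkq H A) = mkq H (A * U) := rfl

lemma stable_exists_mem {S : Set G} (hS : ∀ h ∈ H, ∀ A ∈ S, h * A ∈ S)
    {A B : G} (h : mkq H A = mkq H B) (hA : A ∈ S) : B ∈ S := by
  rw [mkq_eq_mkq] at h
  have := hS _ h _ hA
  simpa [mul_assoc] using this

lemma card_shift (S T : Set G) (hT : ∀ h ∈ H, ∀ A ∈ T, h * A ∈ T) (U : G)
    (hrel : ∀ A : G, A ∈ S ↔ A * U ∈ T) :
    Nat.card {c : Quotient (QuotientGroup.rightRel H) | ∃ A, mkq H A = c ∧ A ∈ S}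
      = Nat.card {c : Quotient (QuotientGroup.rightRel H) | ∃ A, mkq H A = c ∧ A ∈ T} := by
  apply Nat.card_congr
  apply Equiv.subtypeEquiv (rmul H U)
  intro c
  constructor
  · rintro ⟨A, rfl, hA⟩
    exact ⟨A * U, (rmul_mkq H U A).symm, (hrel A).1 hA⟩
  · rintro ⟨B, hB, hBT⟩
    obtain ⟨A, rfl⟩ := Quotient.exists_rep c
    refine ⟨A, rfl, (hrel A).2 ?_⟩
    exact stable_exists_mem H hT (hB.trans (rmul_mkq H U A)) hBT

lemma cosetsIn_eq_exists {S : Set G} (hS : ∀ h ∈ H, ∀ A ∈ S, h * A ∈ S) :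
    {c : Quotient (QuotientGroup.rightRel H) | ∀ A, mkq H A = c → A ∈ S}
      = {c | ∃ A, mkq H A = c ∧ A ∈ S} := by
  ext c
  constructor
  · intro hc
    obtain ⟨A, rfl⟩ := Quotient.exists_rep c
    exact ⟨A, rfl, hc A rfl⟩
  · rintro ⟨A, rfl, hA⟩ B hB
    exact stable_exists_mem H hS hB.symm hA


end Stmt5Aux

open Stmt5Aux in
/-- for a prime `p`, `n ≥ 1`, `0 ≤ i ≤ j ≤ n` and `λ ∈ ℤ^n`, with `g` the
gcd of the entries of `λ`: `N(λ) = |H_{i,j}\S_{i,j}|` if `p ∤ g`; `N(λ) = |H_{i,j}\S_i|`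
if `p ∣ g` but `p² ∤ g`; and `N(λ) = |H_{i,j}\GL_n(ℤ)|` if `p² ∣ g`. -/
theorem statement5 (p n i j : ℕ) (hp : p.Prime) (hn : 1 ≤ n) (hij : i ≤ j) (hj : j ≤ n)
    (lam : Fin n → ℤ) :
    (¬ (p : ℤ) ∣ Finset.univ.gcd lam →
        Ncount p hp n i j lam = Nat.card ↥(cosetsIn (Hij p hp n i j) (Ssetij p n i j))) ∧
    ((p : ℤ) ∣ Finset.univ.gcd lam → ¬ (p : ℤ) ^ 2 ∣ Finset.univ.gcd lam →
        Ncount p hp n i j lam = Nat.card ↥(cosetsIn (Hij p hp n i j) (Sseti p n i))) ∧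
    ((p : ℤ) ^ 2 ∣ Finset.univ.gcd lam →
        Ncount p hp n i j lam = Nat.card (cosetSpace (Hij p hp n i j))) := by
  have hn' : 0 < n := hn
  set H := Hij p hp n i j with hH
  set g : ℤ := Finset.univ.gcd lam with hg
  have hpZ : Prime (p : ℤ) := Nat.prime_iff_prime_int.mp hp
  have hNset : {c : cosetSpace H | ∃ A : (Matrix (Fin n) (Fin n) ℤ)ˣ,
        Quotient.mk (QuotientGroup.rightRel H) A = c ∧
        ∃ μ ∈ L0set p n i j, (A.val)ᵀ *ᵥ μ = lam}
      = {c | ∃ A, mkq H A = c ∧ A ∈ condSet p n i j lam} :=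
    Set.ext fun c => exists_congr fun A => and_congr_right fun _ => cond_iff A lam
  have hNc : Ncount p hp n i j lam
      = Nat.card {c | ∃ A, mkq H A = c ∧ A ∈ condSet p n i j lam} := by
    unfold Ncount
    rw [← hNset]
    rfl
  have hcondmem : ∀ (A : (Matrix (Fin n) (Fin n) ℤ)ˣ), A ∈ condSet p n i j lam ↔
      ∀ b : Fin n, ((b : ℕ) < i → (p : ℤ) ^ 2 ∣ ∑ a, (A⁻¹).val a b * lam a) ∧
        (i ≤ (b : ℕ) → (b : ℕ) < j → (p : ℤ) ∣ ∑ a, (A⁻¹).val a b * lam a) := fun _ => Iff.rfl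
  have main : ∀ (T : Set (Matrix (Fin n) (Fin n) ℤ)ˣ),
      (∀ h ∈ H, ∀ A ∈ T, h * A ∈ T) →
      (∀ U : (Matrix (Fin n) (Fin n) ℤ)ˣ,
        (∀ b, U.val ⟨n - 1, Nat.sub_lt hn' Nat.one_pos⟩ b = lam b / g) →
        (∀ A, A ∈ condSet p n i j lam ↔ A * U⁻¹ ∈ T)) →
      g ≠ 0 →
      Ncount p hp n i j lam = Nat.card ↥(cosetsIn H T) := by
    intro T hT hrel hg0
    have hex : ∃ a : Fin n, lam a ≠ 0 := by
      by_contra hall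
      push_neg at hall
      exact hg0 (Finset.gcd_eq_zero_iff.mpr fun x _ => hall x)
    obtain ⟨a0, ha0⟩ := hex
    have hν : Finset.univ.gcd (fun a => lam a / g) = 1 :=
      Finset.gcd_div_eq_one (Finset.mem_univ a0) ha0
    obtain ⟨U, hU⟩ := exists_unit_row hn' (fun a => lam a / g) hν
    have hcos : cosetsIn H T = {c | ∃ A, mkq H A = c ∧ A ∈ T} := cosetsIn_eq_exists H hT
    rw [hNc, show (cosetsIn H T : Set (cosetSpace H)) = {c | ∃ A, mkq H A = c ∧ A ∈ T} from hcos]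
    exact card_shift H _ T hT U⁻¹ (hrel U hU)
  have hlam : ∀ a, lam a = g * (lam a / g) := fun a =>
    (Int.mul_ediv_cancel' (Finset.gcd_dvd (Finset.mem_univ a))).symm
  have hsum : ∀ (A : (Matrix (Fin n) (Fin n) ℤ)ˣ) (b : Fin n),
      (∑ a, (A⁻¹).val a b * lam a) = g * ∑ a, (A⁻¹).val a b * (lam a / g) := by
    intro A b
    rw [Finset.mul_sum]
    refine Finset.sum_congr rfl fun a _ => ?_
    conv_lhs => rw [hlam a]
    ring
  refine ⟨?_, ?_, ?_⟩
  · -- case p ∤ g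
    intro hnd
    have hg0 : g ≠ 0 := fun h => hnd (h ▸ dvd_zero _)
    have cop : IsCoprime ((p : ℤ)) g := hpZ.coprime_iff_not_dvd.mpr hnd
    apply main (Ssetij p n i j) (Ssetij_stable hn' hij)
    · intro U hU A
      have hw : ∀ b, ((A * U⁻¹)⁻¹).val ⟨n - 1, Nat.sub_lt hn' Nat.one_pos⟩ b
          = ∑ a, (A⁻¹).val a b * (lam a / g) := by
        intro b
        rw [mul_last_row hn' A U b]
        exact Finset.sum_congr rfl fun a _ => by rw [hU a]
      rw [hcondmem A]
      constructor
      · intro hA hnn b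
        have hwb : ((A * U⁻¹)⁻¹).val ⟨n - 1, Nat.sub_lt hnn Nat.one_pos⟩ b
            = ∑ a, (A⁻¹).val a b * (lam a / g) := hw b
        rw [hwb]
        constructor
        · intro hb
          have h1 := (hA b).1 hb
          rw [hsum A b] at h1
          exact (IsCoprime.pow_left cop : IsCoprime ((p:ℤ)^2) g).dvd_of_dvd_mul_left h1
        · intro hb1 hb2
          have h1 := (hA b).2 hb1 hb2
          rw [hsum A b] at h1
          exact cop.dvd_of_dvd_mul_left h1
      · intro hS b
        have hSb := hS hn' b
        rw [hw b] at hSb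
        constructor
        · intro hb
          rw [hsum A b]
          exact (hSb.1 hb).mul_left g
        · intro hb1 hb2
          rw [hsum A b]
          exact (hSb.2 hb1 hb2).mul_left g
    · exact hg0
  · -- case p ∣ g, p² ∤ g
    intro hd1 hd2
    have hg0 : g ≠ 0 := fun h => hd2 (h ▸ dvd_zero _)
    obtain ⟨d, hgd⟩ := hd1
    have hndd : ¬ (p : ℤ) ∣ d := fun hc => hd2 (by rw [hgd, sq]; exact mul_dvd_mul_left _ hc)
    have copd : IsCoprime ((p : ℤ)) d := hpZ.coprime_iff_not_dvd.mpr hndd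
    have hpne : (p : ℤ) ≠ 0 := Int.natCast_ne_zero.mpr hp.ne_zero
    apply main (Sseti p n i) (Sseti_stable hn' hij)
    · intro U hU A
      have hw : ∀ b, ((A * U⁻¹)⁻¹).val ⟨n - 1, Nat.sub_lt hn' Nat.one_pos⟩ b
          = ∑ a, (A⁻¹).val a b * (lam a / g) := by
        intro b
        rw [mul_last_row hn' A U b]
        exact Finset.sum_congr rfl fun a _ => by rw [hU a]
      rw [hcondmem A]
      constructor
      · intro hA hnn b hb
        have hwb : ((A * U⁻¹)⁻¹).val ⟨n - 1, Nat.sub_lt hnn Nat.one_pos⟩ b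
            = ∑ a, (A⁻¹).val a b * (lam a / g) := hw b
        rw [hwb]
        set w : ℤ := ∑ a, (A⁻¹).val a b * (lam a / g) with hwdef
        have h1 : (p : ℤ) ^ 2 ∣ g * w := by
          rw [← hsum A b]
          exact (hA b).1 hb
        have h3 : (p : ℤ) * (p : ℤ) ∣ (p : ℤ) * (d * w) := by
          rw [← mul_assoc, ← hgd, ← sq]
          exact h1
        have h2 := (mul_dvd_mul_iff_left hpne).mp h3
        exact copd.dvd_of_dvd_mul_left h2
      · intro hS b
        have hSb := hS hn' b
        constructor
        · intro hb
          have h1 := hSb hb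
          rw [hw b] at h1
          obtain ⟨w', hw'⟩ := h1
          rw [hsum A b]
          set w : ℤ := ∑ a, (A⁻¹).val a b * (lam a / g) with hwdef
          refine ⟨d * w', ?_⟩
          rw [hgd, hw']
          ring
        · intro hb1 hb2
          rw [hsum A b]
          set w : ℤ := ∑ a, (A⁻¹).val a b * (lam a / g) with hwdef
          rw [hgd]
          exact Dvd.dvd.mul_right ⟨d, rfl⟩ _
    · exact hg0
  · -- case p² ∣ g
    intro hdvd
    have huniv : {c | ∃ A, mkq H A = c ∧ A ∈ condSet p n i j lam} = Set.univ := by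
      rw [Set.eq_univ_iff_forall]
      intro c
      obtain ⟨A, rfl⟩ := Quotient.exists_rep c
      refine ⟨A, rfl, (hcondmem A).mpr fun b => ⟨fun _ => ?_, fun _ _ => ?_⟩⟩
      · exact Finset.dvd_sum fun a _ =>
          Dvd.dvd.mul_left (dvd_trans hdvd (Finset.gcd_dvd (Finset.mem_univ a))) _
      · exact Finset.dvd_sum fun a _ =>
          Dvd.dvd.mul_left (dvd_trans (dvd_trans (dvd_pow_self _ two_ne_zero) hdvd)
            (Finset.gcd_dvd (Finset.mem_univ a))) _
    rw [hNc, huniv]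
    exact Nat.card_congr (Equiv.Set.univ _)


end
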